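/- Let Ω be a bounded open set in ℝ^d, u, v ∈ H¹(Ω) with u - v ∈ H¹_{0,Γ_D}(Ω), and σ ∈ H(div, Ω). Suppose that for all w ∈ H¹_{0,Γ_D}(Ω), (∇u, ∇w)_Ω = (f, w)_Ω + ⟨g, w⟩_{Γ_N}, and that ∇·σ = f in Ω with σ·n = -g on Γ_N. Then ‖∇(u - v)‖²_{L²(Ω)} + ‖∇u + σ‖²_{L²(Ω)} = ‖∇v + σ‖²_{L²(Ω)} (Prager–Synge identity). -/

import Mathlib

open MeasureTheory
open scoped RealInnerProductSpace


open MeasureTheory in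
private lemma memLp_sq_int {α : Type*} {E : Type*} [MeasurableSpace α]
    [NormedAddCommGroup E] {μ : Measure α} {F : α → E} (h : MemLp F 2 μ) :
    Integrable (fun x => ‖F x‖ ^ 2) μ := by
  have := h.integrable_norm_rpow two_ne_zero ENNReal.ofNat_ne_top
  simpa [Real.rpow_natCast] using this

open MeasureTheory in
private lemma memLp_inner_int {α : Type*} {E : Type*} [MeasurableSpace α]
    [NormedAddCommGroup E] [InnerProductSpace ℝ E] {μ : Measure α} {F G : α → E}
    (hF : MemLp F 2 μ) (hG : MemLp G 2 μ) :
    Integrable (fun x => ⟪F x, G x⟫) μ := by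
  refine Integrable.mono' (((memLp_sq_int hF).add (memLp_sq_int hG)).div_const 2)
    (hF.1.inner hG.1) (Filter.Eventually.of_forall fun x => ?_)
  have h1 : |⟪F x, G x⟫| ≤ ‖F x‖ * ‖G x‖ := abs_real_inner_le_norm _ _
  have h2 : 2 * (‖F x‖ * ‖G x‖) ≤ ‖F x‖ ^ 2 + ‖G x‖ ^ 2 := by
    rw [← mul_assoc]; exact two_mul_le_add_sq _ _
  simp only [Real.norm_eq_abs, Pi.add_apply]
  linarith

/-- **Prager–Synge identity.**  `μ` is the Lebesgue measure restricted to the bounded open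
set `Ω`, `ν` is the surface measure on the Neumann boundary `Γ_N`.  `W` is the set of
functions of `H¹_{0,Γ_D}(Ω)` paired with their weak gradients; `gu, gv` are the weak
gradients of `u, v` and `σ ∈ H(div,Ω)` satisfies (weakly) `∇·σ = f` in `Ω` and
`σ·n = -g` on `Γ_N`. -/
theorem prager_synge_identity {d : ℕ}
    (Ω ΓN : Set (EuclideanSpace ℝ (Fin d)))
    (hΩopen : IsOpen Ω) (hΩbdd : Bornology.IsBounded Ω) (hΓN : ΓN ⊆ frontier Ω)
    (μ : Measure (EuclideanSpace ℝ (Fin d))) (hμ : μ = MeasureTheory.volume.restrict Ω)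
    (ν : Measure (EuclideanSpace ℝ (Fin d)))
    (f g : EuclideanSpace ℝ (Fin d) → ℝ)
    (u v : EuclideanSpace ℝ (Fin d) → ℝ)
    (gu gv σ : EuclideanSpace ℝ (Fin d) → EuclideanSpace ℝ (Fin d))
    (W : Set ((EuclideanSpace ℝ (Fin d) → ℝ) ×
      (EuclideanSpace ℝ (Fin d) → EuclideanSpace ℝ (Fin d))))
    (hgu : MemLp gu 2 μ) (hgv : MemLp gv 2 μ) (hσ : MemLp σ 2 μ)
    -- `u - v ∈ H¹_{0,Γ_D}(Ω)` with weak gradient `gu - gv`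
    (huv : (u - v, gu - gv) ∈ W)
    -- variational problem satisfied by `u`
    (hvar : ∀ p ∈ W,
      ∫ x, ⟪gu x, p.2 x⟫ ∂μ = ∫ x, f x * p.1 x ∂μ + ∫ x, g x * p.1 x ∂ν)
    -- weak form of `∇·σ = f` in `Ω` and `σ·n = -g` on `Γ_N`
    (hdivσ : ∀ p ∈ W,
      ∫ x, ⟪σ x, p.2 x⟫ ∂μ = - ∫ x, f x * p.1 x ∂μ - ∫ x, g x * p.1 x ∂ν) :
    ∫ x, ‖gu x - gv x‖ ^ 2 ∂μ + ∫ x, ‖gu x + σ x‖ ^ 2 ∂μ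
      = ∫ x, ‖gv x + σ x‖ ^ 2 ∂μ := by
  classical
  have hw : MemLp (fun x => gu x - gv x) 2 μ := hgu.sub hgv
  have hus : MemLp (fun x => gu x + σ x) 2 μ := hgu.add hσ
  have hvs : MemLp (fun x => gv x + σ x) 2 μ := hgv.add hσ
  have A := hvar _ huv
  have B := hdivσ _ huv
  have hA : ∫ x, ⟪gu x, gu x - gv x⟫ ∂μ
      = ∫ x, f x * (u x - v x) ∂μ + ∫ x, g x * (u x - v x) ∂ν := by
    simpa [Pi.sub_apply] using A
  have hB : ∫ x, ⟪σ x, gu x - gv x⟫ ∂μ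
      = - ∫ x, f x * (u x - v x) ∂μ - ∫ x, g x * (u x - v x) ∂ν := by
    simpa [Pi.sub_apply] using B
  have hcross : ∫ x, ⟪gu x - gv x, gu x + σ x⟫ ∂μ = 0 := by
    have h1 : Integrable (fun x => ⟪gu x, gu x - gv x⟫) μ := memLp_inner_int hgu hw
    have h2 : Integrable (fun x => ⟪σ x, gu x - gv x⟫) μ := memLp_inner_int hσ hw
    have : ∫ x, ⟪gu x - gv x, gu x + σ x⟫ ∂μ
        = (∫ x, ⟪gu x, gu x - gv x⟫ ∂μ) + ∫ x, ⟪σ x, gu x - gv x⟫ ∂μ := by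
      rw [← integral_add h1 h2]
      congr 1 with x
      rw [real_inner_comm]
      simp [inner_add_left]
    rw [this, hA, hB]; ring
  have hpt : ∀ x, ‖gv x + σ x‖ ^ 2
      = ‖gu x + σ x‖ ^ 2 - 2 * ⟪gu x - gv x, gu x + σ x⟫ + ‖gu x - gv x‖ ^ 2 := by
    intro x
    have : gv x + σ x = (gu x + σ x) - (gu x - gv x) := by abel
    rw [this, norm_sub_sq_real, real_inner_comm]
  have hI1 : Integrable (fun x => ‖gu x + σ x‖ ^ 2) μ := memLp_sq_int hus
  have hI2 : Integrable (fun x => ⟪gu x - gv x, gu x + σ x⟫) μ := memLp_inner_int hw hus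
  have hI3 : Integrable (fun x => ‖gu x - gv x‖ ^ 2) μ := memLp_sq_int hw
  calc ∫ x, ‖gu x - gv x‖ ^ 2 ∂μ + ∫ x, ‖gu x + σ x‖ ^ 2 ∂μ
      = ∫ x, ‖gu x + σ x‖ ^ 2 ∂μ - 2 * ∫ x, ⟪gu x - gv x, gu x + σ x⟫ ∂μ
          + ∫ x, ‖gu x - gv x‖ ^ 2 ∂μ := by rw [hcross]; ring
    _ = ∫ x, (‖gu x + σ x‖ ^ 2 - 2 * ⟪gu x - gv x, gu x + σ x⟫ + ‖gu x - gv x‖ ^ 2) ∂μ := by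
          have hI12 : Integrable
              (fun x => ‖gu x + σ x‖ ^ 2 - 2 * ⟪gu x - gv x, gu x + σ x⟫) μ :=
            hI1.sub (hI2.const_mul 2)
          rw [integral_add hI12 hI3, integral_sub hI1 (hI2.const_mul 2), MeasureTheory.integral_const_mul 2 _]
    _ = ∫ x, ‖gv x + σ x‖ ^ 2 ∂μ := by simp only [hpt]
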